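/- Over the rationals (or any field of characteristic 0), with L = 4 and R_l the 4×4 cyclic rotation matrices, the 3L×3L block matrix [[I,0,0],[I, 2R_1, 3R_3],[I, 4R_2, 9R_1]] has nonzero determinant, i.e. is invertible. -/

import Mathlib

/-- Cyclic rotation matrix over ℚ, size 4. -/
def rot4 (l : ℕ) : Matrix (Fin 4) (Fin 4) ℚ :=
  Matrix.of fun i j => if (j : ℕ) = ((i : ℕ) + l) % 4 then 1 else 0

/-- 3×3 block matrix of 4×4 blocks. -/
def blk3 (B : Fin 3 → Fin 3 → Matrix (Fin 4) (Fin 4) ℚ) :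
    Matrix (Fin 3 × Fin 4) (Fin 3 × Fin 4) ℚ :=
  Matrix.of fun p q => B p.1 q.1 p.2 q.2

def nB00 : Matrix (Fin 4) (Fin 4) ℚ := !![1, 0, 0, 0; 0, 1, 0, 0; 0, 0, 1, 0; 0, 0, 0, 1]

def nB01 : Matrix (Fin 4) (Fin 4) ℚ := !![0, 0, 0, 0; 0, 0, 0, 0; 0, 0, 0, 0; 0, 0, 0, 0]

def nB02 : Matrix (Fin 4) (Fin 4) ℚ := !![0, 0, 0, 0; 0, 0, 0, 0; 0, 0, 0, 0; 0, 0, 0, 0]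

def nB10 : Matrix (Fin 4) (Fin 4) ℚ := !![(-3/65), (-9/130), (-23/65), (-69/130); (-69/130), (-3/65), (-9/130), (-23/65); (-23/65), (-69/130), (-3/65), (-9/130); (-9/130), (-23/65), (-69/130), (-3/65)]

def nB11 : Matrix (Fin 4) (Fin 4) ℚ := !![(12/65), (18/65), (27/65), (81/130); (81/130), (12/65), (18/65), (27/65); (27/65), (81/130), (12/65), (18/65); (18/65), (27/65), (81/130), (12/65)]

def nB12 : Matrix (Fin 4) (Fin 4) ℚ := !![(-9/65), (-27/130), (-4/65), (-6/65); (-6/65), (-9/65), (-27/130), (-4/65); (-4/65), (-6/65), (-9/65), (-27/130); (-27/130), (-4/65), (-6/65), (-9/65)]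

def nB20 : Matrix (Fin 4) (Fin 4) ℚ := !![(46/195), (4/195), (2/65), (3/65); (3/65), (46/195), (4/195), (2/65); (2/65), (3/65), (46/195), (4/195); (4/195), (2/65), (3/65), (46/195)]

def nB21 : Matrix (Fin 4) (Fin 4) ℚ := !![(-18/65), (-16/195), (-8/65), (-12/65); (-12/65), (-18/65), (-16/195), (-8/65); (-8/65), (-12/65), (-18/65), (-16/195); (-16/195), (-8/65), (-12/65), (-18/65)]

def nB22 : Matrix (Fin 4) (Fin 4) ℚ := !![(8/195), (4/65), (6/65), (9/65); (9/65), (8/195), (4/65), (6/65); (6/65), (9/65), (8/195), (4/65); (4/65), (6/65), (9/65), (8/195)]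

def nInv : Matrix (Fin 3 × Fin 4) (Fin 3 × Fin 4) ℚ :=
  blk3 ![![nB00, nB01, nB02], ![nB10, nB11, nB12], ![nB20, nB21, nB22]]

lemma fv0 : ((0 : Fin 4) : ℕ) = 0 := rfl
lemma fv1 : ((1 : Fin 4) : ℕ) = 1 := rfl
lemma fv2 : ((2 : Fin 4) : ℕ) = 2 := rfl
lemma fv3 : ((3 : Fin 4) : ℕ) = 3 := rfl

set_option maxHeartbeats 1000000

lemma blk3_mul (A B : Fin 3 → Fin 3 → Matrix (Fin 4) (Fin 4) ℚ) :
    blk3 A * blk3 B = blk3 fun i k => A i 0 * B 0 k + A i 1 * B 1 k + A i 2 * B 2 k := by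
  ext ⟨a, b⟩ ⟨c, d⟩
  simp [blk3, Matrix.mul_apply, Fintype.sum_prod_type, Fin.sum_univ_three, Finset.sum_apply,
    Matrix.sum_apply, add_assoc]

lemma blk3_congr {A B : Fin 3 → Fin 3 → Matrix (Fin 4) (Fin 4) ℚ}
    (h : ∀ i k, A i k = B i k) : blk3 A = blk3 B := by
  ext ⟨a, b⟩ ⟨c, d⟩
  simp only [blk3, Matrix.of_apply, h]

lemma blk3_one : blk3 (fun i k => if i = k then 1 else 0) = 1 := by
  ext ⟨a, b⟩ ⟨c, d⟩
  by_cases h : a = c <;>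
    simp [blk3, Matrix.one_apply, Prod.ext_iff, h]

lemma nB00_one : nB00 = 1 := by
  ext a b
  fin_cases a <;> fin_cases b <;> rfl

lemma nB01_zero : nB01 = 0 := by
  ext a b
  fin_cases a <;> fin_cases b <;> rfl

lemma nB02_zero : nB02 = 0 := by
  ext a b
  fin_cases a <;> fin_cases b <;> rfl

lemma e10 : nB00 + (2 • rot4 1) * nB10 + (3 • rot4 3) * nB20 = 0 := by
  ext i j
  simp only [Matrix.add_apply, Matrix.mul_apply, Matrix.smul_apply, Fin.sum_univ_four,
    Matrix.zero_apply, Matrix.one_apply, rot4, Matrix.of_apply, smul_eq_mul,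
    nB00, nB10, nB20]
  fin_cases i <;> fin_cases j <;> norm_num [fv0, fv1, fv2, fv3, Fin.ext_iff] <;> simp [Matrix.vecHead, Matrix.vecTail] <;> norm_num

lemma e11 : nB01 + (2 • rot4 1) * nB11 + (3 • rot4 3) * nB21 = 1 := by
  ext i j
  simp only [Matrix.add_apply, Matrix.mul_apply, Matrix.smul_apply, Fin.sum_univ_four,
    Matrix.zero_apply, Matrix.one_apply, rot4, Matrix.of_apply, smul_eq_mul,
    nB01, nB11, nB21]
  fin_cases i <;> fin_cases j <;> norm_num [fv0, fv1, fv2, fv3, Fin.ext_iff] <;> simp [Matrix.vecHead, Matrix.vecTail] <;> norm_num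

lemma e12 : nB02 + (2 • rot4 1) * nB12 + (3 • rot4 3) * nB22 = 0 := by
  ext i j
  simp only [Matrix.add_apply, Matrix.mul_apply, Matrix.smul_apply, Fin.sum_univ_four,
    Matrix.zero_apply, Matrix.one_apply, rot4, Matrix.of_apply, smul_eq_mul,
    nB02, nB12, nB22]
  fin_cases i <;> fin_cases j <;> norm_num [fv0, fv1, fv2, fv3, Fin.ext_iff] <;> simp [Matrix.vecHead, Matrix.vecTail] <;> norm_num

lemma e20 : nB00 + (4 • rot4 2) * nB10 + (9 • rot4 1) * nB20 = 0 := by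
  ext i j
  simp only [Matrix.add_apply, Matrix.mul_apply, Matrix.smul_apply, Fin.sum_univ_four,
    Matrix.zero_apply, Matrix.one_apply, rot4, Matrix.of_apply, smul_eq_mul,
    nB00, nB10, nB20]
  fin_cases i <;> fin_cases j <;> norm_num [fv0, fv1, fv2, fv3, Fin.ext_iff] <;> simp [Matrix.vecHead, Matrix.vecTail] <;> norm_num

lemma e21 : nB01 + (4 • rot4 2) * nB11 + (9 • rot4 1) * nB21 = 0 := by
  ext i j
  simp only [Matrix.add_apply, Matrix.mul_apply, Matrix.smul_apply, Fin.sum_univ_four,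
    Matrix.zero_apply, Matrix.one_apply, rot4, Matrix.of_apply, smul_eq_mul,
    nB01, nB11, nB21]
  fin_cases i <;> fin_cases j <;> norm_num [fv0, fv1, fv2, fv3, Fin.ext_iff] <;> simp [Matrix.vecHead, Matrix.vecTail] <;> norm_num

lemma e22 : nB02 + (4 • rot4 2) * nB12 + (9 • rot4 1) * nB22 = 1 := by
  ext i j
  simp only [Matrix.add_apply, Matrix.mul_apply, Matrix.smul_apply, Fin.sum_univ_four,
    Matrix.zero_apply, Matrix.one_apply, rot4, Matrix.of_apply, smul_eq_mul,
    nB02, nB12, nB22]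
  fin_cases i <;> fin_cases j <;> norm_num [fv0, fv1, fv2, fv3, Fin.ext_iff] <;> simp [Matrix.vecHead, Matrix.vecTail] <;> norm_num

lemma key : (blk3 ![![1, 0, 0], ![1, 2 • rot4 1, 3 • rot4 3], ![1, 4 • rot4 2, 9 • rot4 1]]) * nInv = 1 := by
  rw [nInv, blk3_mul, ← blk3_one]
  refine blk3_congr ?_
  intro i k
  fin_cases i <;> fin_cases k
  · rw [if_pos rfl]
    show 1 * nB00 + 0 * nB10 + 0 * nB20 = 1
    rw [one_mul, zero_mul, zero_mul, add_zero, add_zero, nB00_one]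
  · rw [if_neg (by decide)]
    show 1 * nB01 + 0 * nB11 + 0 * nB21 = 0
    rw [one_mul, zero_mul, zero_mul, add_zero, add_zero, nB01_zero]
  · rw [if_neg (by decide)]
    show 1 * nB02 + 0 * nB12 + 0 * nB22 = 0
    rw [one_mul, zero_mul, zero_mul, add_zero, add_zero, nB02_zero]
  · rw [if_neg (by decide)]
    show 1 * nB00 + (2 • rot4 1) * nB10 + (3 • rot4 3) * nB20 = 0
    rw [one_mul]; exact e10
  · rw [if_pos rfl]
    show 1 * nB01 + (2 • rot4 1) * nB11 + (3 • rot4 3) * nB21 = 1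
    rw [one_mul]; exact e11
  · rw [if_neg (by decide)]
    show 1 * nB02 + (2 • rot4 1) * nB12 + (3 • rot4 3) * nB22 = 0
    rw [one_mul]; exact e12
  · rw [if_neg (by decide)]
    show 1 * nB00 + (4 • rot4 2) * nB10 + (9 • rot4 1) * nB20 = 0
    rw [one_mul]; exact e20
  · rw [if_neg (by decide)]
    show 1 * nB01 + (4 • rot4 2) * nB11 + (9 • rot4 1) * nB21 = 0
    rw [one_mul]; exact e21
  · rw [if_pos rfl]
    show 1 * nB02 + (4 • rot4 2) * nB12 + (9 • rot4 1) * nB22 = 1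
    rw [one_mul]; exact e22

theorem case3_invertible :
    (blk3 ![![1, 0, 0], ![1, 2 • rot4 1, 3 • rot4 3], ![1, 4 • rot4 2, 9 • rot4 1]]).det ≠ 0 ∧
    IsUnit (blk3 ![![1, 0, 0], ![1, 2 • rot4 1, 3 • rot4 3], ![1, 4 • rot4 2, 9 • rot4 1]]) := by
  have hu : IsUnit (blk3 ![![1, 0, 0], ![1, 2 • rot4 1, 3 • rot4 3], ![1, 4 • rot4 2, 9 • rot4 1]]) :=
    (Matrix.isUnit_iff_isUnit_det _).mpr (Matrix.isUnit_det_of_right_inverse key)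
  exact ⟨((Matrix.isUnit_iff_isUnit_det _).mp hu).ne_zero, hu⟩
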